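/- Let 𝒞 be a finite nonempty family of polyhedra in ℝ^n, each with nonempty topological interior, whose interiors are pairwise disjoint. Call a set F a facet of a polyhedron P ∈ 𝒞 if there exist a ∈ ℝ^n with a ≠ 0 and β ∈ ℝ such that a · x ≤ β for all x ∈ P, F = P ∩ {x : a · x = β}, and the affine span of F has dimension n − 1. Assume that for every P ∈ 𝒞 and every facet F of P there exists Q ∈ 𝒞 with Q ≠ P such that F is also a facet of Q. Then ⋃ 𝒞 = ℝ^n. -/

import Mathlib

open Matrix MeasureTheory

/-- A (convex) polyhedron in `ℝ^n`: a set of the form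
`{x : ∀ i, a i · x ≤ b i}` for finitely many vectors `a i` and scalars `b i`. -/
def IsPolyhedron {n : ℕ} (P : Set (Fin n → ℝ)) : Prop :=
  ∃ (k : ℕ) (a : Fin k → (Fin n → ℝ)) (b : Fin k → ℝ),
    P = {x : Fin n → ℝ | ∀ i, a i ⬝ᵥ x ≤ b i}

/-- `F` is a facet of `P ⊆ ℝ^n`: there are `a ≠ 0` and `β` such that
`a · x ≤ β` on `P`, `F = P ∩ {x : a · x = β}`, and the affine span of `F` has
dimension `n − 1`. -/
def IsFacet {n : ℕ} (F P : Set (Fin n → ℝ)) : Prop :=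
  ∃ (a : Fin n → ℝ) (β : ℝ), a ≠ 0 ∧ (∀ x ∈ P, a ⬝ᵥ x ≤ β) ∧
    F = P ∩ {x : Fin n → ℝ | a ⬝ᵥ x = β} ∧
    Module.finrank ℝ (affineSpan ℝ F).direction = n - 1

variable {n : ℕ}

/-- dot product with a fixed vector, as a linear map -/
def dotL (a : Fin n → ℝ) : (Fin n → ℝ) →ₗ[ℝ] ℝ where
  toFun x := a ⬝ᵥ x
  map_add' x y := by simp [dotProduct_add]
  map_smul' r x := by simp [dotProduct_smul]

lemma dotL_apply (a x : Fin n → ℝ) : dotL a x = a ⬝ᵥ x := rfl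

lemma continuous_dot (a : Fin n → ℝ) : Continuous fun x : Fin n → ℝ => a ⬝ᵥ x :=
  (dotL a).continuous_of_finiteDimensional

lemma dot_self_pos {a : Fin n → ℝ} (ha : a ≠ 0) : 0 < a ⬝ᵥ a := by
  have h0 : 0 ≤ a ⬝ᵥ a := Finset.sum_nonneg fun i _ => mul_self_nonneg _
  rcases lt_or_eq_of_le h0 with h | h
  · exact h
  · exact absurd ((dotProduct_self_eq_zero).mp h.symm) ha

/-- two equal hyperplanes have proportional data -/
lemma hyperplane_eq_iff {a c : Fin n → ℝ} {b d : ℝ} (ha : a ≠ 0) (hc : c ≠ 0)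
    (h : {y : Fin n → ℝ | a ⬝ᵥ y = b} = {y : Fin n → ℝ | c ⬝ᵥ y = d}) :
    ∃ l : ℝ, l ≠ 0 ∧ c = l • a ∧ d = l * b := by
  have haa := dot_self_pos ha
  have hmem : ∀ y : Fin n → ℝ, a ⬝ᵥ y = b → c ⬝ᵥ y = d :=
    fun y hy => (Set.ext_iff.mp h y).mp hy
  have hy₀mem : a ⬝ᵥ ((b / (a ⬝ᵥ a)) • a) = b := by
    rw [dotProduct_smul, smul_eq_mul]; field_simp
  have hcy₀ : c ⬝ᵥ ((b / (a ⬝ᵥ a)) • a) = d := hmem _ hy₀mem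
  have hker : ∀ v : Fin n → ℝ, a ⬝ᵥ v = 0 → c ⬝ᵥ v = 0 := by
    intro v hv
    have h1 : a ⬝ᵥ ((b / (a ⬝ᵥ a)) • a + v) = b := by
      rw [dotProduct_add, hv, hy₀mem, add_zero]
    have h2 := hmem _ h1
    rw [dotProduct_add, hcy₀] at h2
    linarith
  set l := (a ⬝ᵥ c) / (a ⬝ᵥ a) with hl
  have hw : a ⬝ᵥ (c - l • a) = 0 := by
    rw [dotProduct_sub, dotProduct_smul, smul_eq_mul, hl]
    field_simp
    ring
  have hcw : c ⬝ᵥ (c - l • a) = 0 := hker _ hw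
  have hlw : (l • a) ⬝ᵥ (c - l • a) = 0 := by
    rw [smul_dotProduct, dotProduct_comm] at *
    rw [smul_eq_mul, hw, mul_zero]
  have hww : (c - l • a) ⬝ᵥ (c - l • a) = 0 := by
    rw [sub_dotProduct, hcw, hlw, sub_zero]
  have hcl : c = l • a := by
    have h0 : c - l • a = 0 := dotProduct_self_eq_zero.mp hww
    linear_combination (norm := module) h0
  have hl0 : l ≠ 0 := by
    intro h0
    apply hc
    rw [hcl, h0, zero_smul]
  refine ⟨l, hl0, hcl, ?_⟩
  have : c ⬝ᵥ ((b / (a ⬝ᵥ a)) • a) = l * (a ⬝ᵥ ((b / (a ⬝ᵥ a)) • a)) := by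
    rw [hcl, smul_dotProduct, smul_eq_mul]
  rw [hcy₀, hy₀mem] at this
  exact this

lemma finrank_ker_dot {a : Fin n → ℝ} (ha : a ≠ 0) :
    Module.finrank ℝ (LinearMap.ker (dotL a)) = n - 1 := by
  have hsurj : Function.Surjective (dotL a) := by
    intro r
    refine ⟨(r / (a ⬝ᵥ a)) • a, ?_⟩
    show a ⬝ᵥ _ = r
    rw [dotProduct_smul, smul_eq_mul]
    field_simp [(dot_self_pos ha).ne']
  have hrn := LinearMap.finrank_range_add_finrank_ker (dotL a)
  rw [LinearMap.range_eq_top.mpr hsurj] at hrn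
  have h1 : Module.finrank ℝ (⊤ : Submodule ℝ ℝ) = 1 := by
    simp [finrank_top]
  have h2 : Module.finrank ℝ (Fin n → ℝ) = n := by simp
  omega

/-- hyperplane set as coset of kernel: the vector span -/
lemma vectorSpan_hyperplane {a : Fin n → ℝ} {b : ℝ} (ha : a ≠ 0) :
    vectorSpan ℝ {y : Fin n → ℝ | a ⬝ᵥ y = b} = LinearMap.ker (dotL a) := by
  have hx : a ⬝ᵥ ((b / (a ⬝ᵥ a)) • a) = b := by
    rw [dotProduct_smul, smul_eq_mul]; field_simp [(dot_self_pos ha).ne']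
  apply le_antisymm
  · rw [vectorSpan, Submodule.span_le]
    rintro v ⟨y₁, hy₁, y₂, hy₂, rfl⟩
    simp only [Set.mem_setOf_eq] at hy₁ hy₂
    simp only [SetLike.mem_coe, LinearMap.mem_ker]
    show a ⬝ᵥ (y₁ - y₂) = 0
    rw [dotProduct_sub, hy₁, hy₂, sub_self]
  · intro v hv
    have h1 : v + (b / (a ⬝ᵥ a)) • a ∈ {y : Fin n → ℝ | a ⬝ᵥ y = b} := by
      show a ⬝ᵥ _ = b
      rw [dotProduct_add, hx]
      have : a ⬝ᵥ v = 0 := hv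
      rw [this, zero_add]
    have h2 : (b / (a ⬝ᵥ a)) • a ∈ {y : Fin n → ℝ | a ⬝ᵥ y = b} := hx
    have := vsub_mem_vectorSpan ℝ h1 h2
    simpa using this

lemma hyperplane_ne_univ {a : Fin n → ℝ} {b : ℝ} (ha : a ≠ 0) :
    {y : Fin n → ℝ | a ⬝ᵥ y = b} ≠ Set.univ := by
  intro h
  have h1 : a ⬝ᵥ ((b / (a ⬝ᵥ a)) • a + a) = b := by
    have : ((b / (a ⬝ᵥ a)) • a + a) ∈ {y : Fin n → ℝ | a ⬝ᵥ y = b} := h ▸ Set.mem_univ _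
    exact this
  rw [dotProduct_add] at h1
  have hx : a ⬝ᵥ ((b / (a ⬝ᵥ a)) • a) = b := by
    rw [dotProduct_smul, smul_eq_mul]; field_simp [(dot_self_pos ha).ne']
  rw [hx] at h1
  have := dot_self_pos ha
  linarith

/-- a hyperplane has measure zero -/
lemma volume_hyperplane {a : Fin n → ℝ} {b : ℝ} (ha : a ≠ 0) :
    volume {y : Fin n → ℝ | a ⬝ᵥ y = b} = 0 := by
  have hx : a ⬝ᵥ ((b / (a ⬝ᵥ a)) • a) = b := by
    rw [dotProduct_smul, smul_eq_mul]; field_simp [(dot_self_pos ha).ne']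
  set s : AffineSubspace ℝ (Fin n → ℝ) := affineSpan ℝ {y : Fin n → ℝ | a ⬝ᵥ y = b} with hs
  have hsub : {y : Fin n → ℝ | a ⬝ᵥ y = b} ⊆ (s : Set (Fin n → ℝ)) := subset_affineSpan ℝ _
  have hne : s ≠ ⊤ := by
    intro htop
    have hd : s.direction = ⊤ := by rw [htop]; exact AffineSubspace.direction_top ℝ _ _
    rw [hs, direction_affineSpan, vectorSpan_hyperplane ha] at hd
    have := finrank_ker_dot ha
    rw [hd] at this
    have h2 : Module.finrank ℝ (⊤ : Submodule ℝ (Fin n → ℝ)) = n := by simp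
    have hn : 0 < n := by
      rcases Nat.eq_zero_or_pos n with h | h
      · exfalso; apply ha; subst h; ext i; exact absurd i.2 (by omega)
      · exact h
    omega
  have := Measure.addHaar_affineSubspace (volume : Measure (Fin n → ℝ)) s hne
  exact measure_mono_null hsub this

lemma halfball {k : ℕ} (a : Fin k → Fin n → ℝ) (b : Fin k → ℝ)
    (hint : (interior {x : Fin n → ℝ | ∀ i, a i ⬝ᵥ x ≤ b i}).Nonempty)
    (x : Fin n → ℝ) (hxP : ∀ i, a i ⬝ᵥ x ≤ b i)
    (hxint : x ∉ interior {x : Fin n → ℝ | ∀ i, a i ⬝ᵥ x ≤ b i})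
    (hpairs : ∀ i j, a i ≠ 0 → a j ≠ 0 → a i ⬝ᵥ x = b i → a j ⬝ᵥ x = b j →
      {y : Fin n → ℝ | a i ⬝ᵥ y = b i} = {y : Fin n → ℝ | a j ⬝ᵥ y = b j}) :
    ∃ i, a i ≠ 0 ∧ a i ⬝ᵥ x = b i ∧ ∃ ε > 0,
      Metric.ball x ε ∩ {y | a i ⬝ᵥ y ≤ b i} ⊆ {x : Fin n → ℝ | ∀ i, a i ⬝ᵥ x ≤ b i} := by
  set P := {x : Fin n → ℝ | ∀ i, a i ⬝ᵥ x ≤ b i} with hP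
  -- there is an active constraint with nonzero normal
  by_cases hact : ∃ i, a i ≠ 0 ∧ a i ⬝ᵥ x = b i
  swap
  · exfalso
    push_neg at hact
    apply hxint
    have hU : IsOpen {y : Fin n → ℝ | ∀ i, a i ≠ 0 → a i ⬝ᵥ y < b i} := by
      have : {y : Fin n → ℝ | ∀ i, a i ≠ 0 → a i ⬝ᵥ y < b i}
          = ⋂ i, {y : Fin n → ℝ | a i ≠ 0 → a i ⬝ᵥ y < b i} := by
        ext y; simp [Set.mem_iInter]
      rw [this]
      apply isOpen_iInter_of_finite
      intro i
      by_cases h : a i = 0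
      · have : {y : Fin n → ℝ | a i ≠ 0 → a i ⬝ᵥ y < b i} = Set.univ := by
          ext y; simp [h]
        rw [this]; exact isOpen_univ
      · have : {y : Fin n → ℝ | a i ≠ 0 → a i ⬝ᵥ y < b i}
            = {y : Fin n → ℝ | a i ⬝ᵥ y < b i} := by
          ext y; simp [h]
        rw [this]
        exact isOpen_lt (continuous_dot (a i)) continuous_const
    apply mem_interior.mpr
    refine ⟨{y : Fin n → ℝ | ∀ i, a i ≠ 0 → a i ⬝ᵥ y < b i}, ?_, hU, ?_⟩
    · intro y hy i
      by_cases h : a i = 0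
      · rw [h, zero_dotProduct]
        have := hxP i
        rw [h, zero_dotProduct] at this
        exact this
      · exact le_of_lt (hy i h)
    · intro i hi
      exact lt_of_le_of_ne (hxP i) (hact i hi)
  obtain ⟨i₀, hai₀, hacti₀⟩ := hact
  have hj : ∀ j, ∃ ε, 0 < ε ∧
      ∀ y ∈ Metric.ball x ε, a i₀ ⬝ᵥ y ≤ b i₀ → a j ⬝ᵥ y ≤ b j := by
    intro j
    by_cases hz : a j = 0
    · refine ⟨1, one_pos, fun y _ _ => ?_⟩
      rw [hz, zero_dotProduct]
      have := hxP j
      rw [hz, zero_dotProduct] at this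
      exact this
    by_cases hactj : a j ⬝ᵥ x = b j
    · -- active: hyperplanes equal, proportional with positive factor
      obtain ⟨l, hl0, hcl, hdl⟩ :=
        hyperplane_eq_iff hai₀ hz (hpairs i₀ j hai₀ hz hacti₀ hactj)
      rcases lt_or_gt_of_ne hl0 with hlneg | hlpos
      · -- negative factor: P lies inside a hyperplane, contradicting interior
        exfalso
        have hPsub : P ⊆ {y : Fin n → ℝ | a i₀ ⬝ᵥ y = b i₀} := by
          intro y hy
          have h1 : a i₀ ⬝ᵥ y ≤ b i₀ := hy i₀
          have h2 : a j ⬝ᵥ y ≤ b j := hy j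
          rw [hcl, hdl, smul_dotProduct, smul_eq_mul] at h2
          have : b i₀ ≤ a i₀ ⬝ᵥ y := by
            rcases le_or_gt (b i₀) (a i₀ ⬝ᵥ y) with h | h
            · exact h
            · nlinarith
          exact le_antisymm h1 this
        obtain ⟨z, hz'⟩ := hint
        obtain ⟨δ, hδ, hball⟩ := Metric.isOpen_iff.mp isOpen_interior z hz'
        set r := δ / (2 * (‖a i₀‖ + 1)) with hr
        have hrpos : 0 < r := by
          apply div_pos hδ
          positivity
        have hmem : z + r • a i₀ ∈ P := by
          apply interior_subset
          apply hball
          rw [Metric.mem_ball, dist_eq_norm, add_sub_cancel_left, norm_smul,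
            Real.norm_eq_abs, abs_of_pos hrpos, hr]
          have h1 : ‖a i₀‖ < ‖a i₀‖ + 1 := by linarith
          rw [div_mul_eq_mul_div]
          rw [div_lt_iff₀ (by positivity)]
          nlinarith [norm_nonneg (a i₀)]
        have hzP : z ∈ P := interior_subset hz'
        have e1 : a i₀ ⬝ᵥ (z + r • a i₀) = b i₀ := hPsub hmem
        have e2 : a i₀ ⬝ᵥ z = b i₀ := hPsub hzP
        rw [dotProduct_add, e2, dotProduct_smul, smul_eq_mul] at e1
        have := dot_self_pos hai₀
        nlinarith
      · -- positive factor: constraint j follows from constraint i₀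
        refine ⟨1, one_pos, fun y _ hy => ?_⟩
        rw [hcl, hdl, smul_dotProduct, smul_eq_mul]
        nlinarith
    · -- inactive: strict inequality persists nearby
      have hlt : a j ⬝ᵥ x < b j := lt_of_le_of_ne (hxP j) hactj
      have hopen : IsOpen {y : Fin n → ℝ | a j ⬝ᵥ y < b j} :=
        isOpen_lt (continuous_dot (a j)) continuous_const
      obtain ⟨ε, hε, hball⟩ := Metric.isOpen_iff.mp hopen x hlt
      exact ⟨ε, hε, fun y hy _ => le_of_lt (hball hy)⟩
  choose εf hεf using hj
  refine ⟨i₀, hai₀, hacti₀, Finset.univ.inf' ⟨i₀, Finset.mem_univ _⟩ εf, ?_, ?_⟩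
  · rw [gt_iff_lt]; refine (Finset.lt_inf'_iff _).mpr ?_
    exact fun j _ => (hεf j).1
  · rintro y ⟨hyb, hyh⟩ j
    exact (hεf j).2 y
      (Metric.ball_subset_ball (Finset.inf'_le _ (Finset.mem_univ j)) hyb) hyh

lemma isFacet_of_halfball {k : ℕ} (a : Fin k → Fin n → ℝ) (b : Fin k → ℝ) (i₀ : Fin k)
    (ha : a i₀ ≠ 0) (x : Fin n → ℝ) (hx : a i₀ ⬝ᵥ x = b i₀) (ε : ℝ) (hε : 0 < ε)
    (hball : Metric.ball x ε ∩ {y | a i₀ ⬝ᵥ y ≤ b i₀}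
      ⊆ {x : Fin n → ℝ | ∀ i, a i ⬝ᵥ x ≤ b i}) :
    IsFacet ({x : Fin n → ℝ | ∀ i, a i ⬝ᵥ x ≤ b i} ∩ {y : Fin n → ℝ | a i₀ ⬝ᵥ y = b i₀})
      {x : Fin n → ℝ | ∀ i, a i ⬝ᵥ x ≤ b i} := by
  set P := {x : Fin n → ℝ | ∀ i, a i ⬝ᵥ x ≤ b i} with hPdef
  set H := {y : Fin n → ℝ | a i₀ ⬝ᵥ y = b i₀} with hHdef
  set F := P ∩ H with hFdef
  refine ⟨a i₀, b i₀, ha, fun y hy => hy i₀, rfl, ?_⟩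
  have hxF : x ∈ F := by
    constructor
    · exact hball ⟨Metric.mem_ball_self hε, le_of_eq hx⟩
    · exact hx
  have hHsub : H ⊆ (affineSpan ℝ F : Set (Fin n → ℝ)) := by
    intro y hy
    set v := y - x with hv
    have hav : a i₀ ⬝ᵥ v = 0 := by
      rw [hv, dotProduct_sub, hy, hx, sub_self]
    set δ := ε / (2 * (‖v‖ + 1)) with hδdef
    have hδ : 0 < δ := by positivity
    have hmem : x + δ • v ∈ F := by
      constructor
      · apply hball
        constructor
        · rw [Metric.mem_ball, dist_eq_norm, add_sub_cancel_left, norm_smul,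
            Real.norm_eq_abs, abs_of_pos hδ, hδdef, div_mul_eq_mul_div,
            div_lt_iff₀ (by positivity)]
          nlinarith [norm_nonneg v]
        · show a i₀ ⬝ᵥ (x + δ • v) ≤ b i₀
          rw [dotProduct_add, dotProduct_smul, hav, smul_zero, add_zero, hx]
      · show a i₀ ⬝ᵥ (x + δ • v) = b i₀
        rw [dotProduct_add, dotProduct_smul, hav, smul_zero, add_zero, hx]
    have h1 : x + δ • v ∈ affineSpan ℝ F := subset_affineSpan ℝ F hmem
    have h2 : x ∈ affineSpan ℝ F := subset_affineSpan ℝ F hxF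
    have h3 := AffineSubspace.smul_vsub_vadd_mem (affineSpan ℝ F) (1/δ) h1 h2 h2
    have : (1/δ) • ((x + δ • v) -ᵥ x) +ᵥ x = y := by
      rw [vsub_eq_sub, add_sub_cancel_left, smul_smul, one_div,
        inv_mul_cancel₀ (ne_of_gt hδ), one_smul, vadd_eq_add, hv]
      abel
    rwa [this] at h3
  have hspan : affineSpan ℝ F = affineSpan ℝ H := by
    apply le_antisymm
    · exact affineSpan_mono ℝ Set.inter_subset_right
    · exact affineSpan_le.mpr hHsub
  rw [hspan, direction_affineSpan, vectorSpan_hyperplane ha, finrank_ker_dot ha]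

/-- the affine span of the insertion of a point into the intersection of two
distinct hyperplanes has measure zero -/
lemma volume_span_insert_zero {a c : Fin n → ℝ} {b d : ℝ} (ha : a ≠ 0) (hc : c ≠ 0)
    (hne : {y : Fin n → ℝ | a ⬝ᵥ y = b} ≠ {y : Fin n → ℝ | c ⬝ᵥ y = d})
    (C : Set (Fin n → ℝ))
    (hC : C ⊆ {y : Fin n → ℝ | a ⬝ᵥ y = b} ∩ {y : Fin n → ℝ | c ⬝ᵥ y = d})
    (hCne : C.Nonempty) (x : Fin n → ℝ) :
    volume ((affineSpan ℝ (insert x C) : AffineSubspace ℝ (Fin n → ℝ)) :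
      Set (Fin n → ℝ)) = 0 := by
  obtain ⟨w, hw⟩ := hCne
  have hwa : a ⬝ᵥ w = b := (hC hw).1
  have hwc : c ⬝ᵥ w = d := (hC hw).2
  -- kernels are distinct
  have hker_ne : LinearMap.ker (dotL a) ≠ LinearMap.ker (dotL c) := by
    intro hk
    apply hne
    ext y
    simp only [Set.mem_setOf_eq]
    constructor
    · intro hy
      have h1 : y - w ∈ LinearMap.ker (dotL a) := by
        simp only [LinearMap.mem_ker]
        show a ⬝ᵥ (y - w) = 0
        rw [dotProduct_sub, hy, hwa, sub_self]
      rw [hk] at h1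
      have h2 : c ⬝ᵥ (y - w) = 0 := h1
      rw [dotProduct_sub, hwc] at h2
      linarith
    · intro hy
      have h1 : y - w ∈ LinearMap.ker (dotL c) := by
        simp only [LinearMap.mem_ker]
        show c ⬝ᵥ (y - w) = 0
        rw [dotProduct_sub, hy, hwc, sub_self]
      rw [← hk] at h1
      have h2 : a ⬝ᵥ (y - w) = 0 := h1
      rw [dotProduct_sub, hwa] at h2
      linarith
  -- the intersection of the two kernels has rank ≤ n - 2
  set K := LinearMap.ker (dotL a) ⊓ LinearMap.ker (dotL c) with hK
  have hKlt : K < LinearMap.ker (dotL a) := by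
    rcases lt_or_eq_of_le (inf_le_left :
        K ≤ LinearMap.ker (dotL a)) with h | h
    · exact h
    · exfalso
      have hle : LinearMap.ker (dotL a) ≤ LinearMap.ker (dotL c) := by
        rw [← h]; exact inf_le_right
      have : LinearMap.ker (dotL a) = LinearMap.ker (dotL c) := by
        apply Submodule.eq_of_le_of_finrank_le hle
        rw [finrank_ker_dot hc, finrank_ker_dot ha]
      exact hker_ne this
  have hKrank : Module.finrank ℝ K < n - 1 := by
    have := Submodule.finrank_lt_finrank_of_lt hKlt
    rwa [finrank_ker_dot ha] at this
  -- vectorSpan C ≤ K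
  have hvs : vectorSpan ℝ C ≤ K := by
    rw [vectorSpan, Submodule.span_le]
    rintro v ⟨y₁, hy₁, y₂, hy₂, rfl⟩
    constructor
    · show a ⬝ᵥ (y₁ - y₂) = 0
      rw [dotProduct_sub, (hC hy₁).1, (hC hy₂).1, sub_self]
    · show c ⬝ᵥ (y₁ - y₂) = 0
      rw [dotProduct_sub, (hC hy₁).2, (hC hy₂).2, sub_self]
  -- direction of the affine span with the extra point
  have hwspan : w ∈ affineSpan ℝ C := subset_affineSpan ℝ C hw
  have hins : affineSpan ℝ (insert x ((affineSpan ℝ C : AffineSubspace ℝ (Fin n → ℝ)) :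
      Set (Fin n → ℝ))) = affineSpan ℝ (insert x C) :=
    affineSpan_insert_affineSpan ℝ x C
  have hdir := AffineSubspace.direction_affineSpan_insert (p₂ := x) hwspan
  rw [hins] at hdir
  have hrank : Module.finrank ℝ (affineSpan ℝ (insert x C)).direction < n := by
    rw [hdir]
    have h1 : Module.finrank ℝ (Submodule.span ℝ {x -ᵥ w}) ≤ 1 := by
      by_cases hv : x -ᵥ w = 0
      · rw [hv, Submodule.span_zero_singleton, finrank_bot]
        norm_num
      · rw [finrank_span_singleton hv]
    have h2 : Module.finrank ℝ (affineSpan ℝ C).direction ≤ Module.finrank ℝ K := by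
      apply Submodule.finrank_mono
      rw [direction_affineSpan]
      exact hvs
    have h3 := Submodule.finrank_sup_add_finrank_inf_eq (Submodule.span ℝ {x -ᵥ w})
      (affineSpan ℝ C).direction
    omega
  have hne_top : affineSpan ℝ (insert x C) ≠ ⊤ := by
    intro htop
    rw [htop, AffineSubspace.direction_top] at hrank
    simp at hrank
  exact Measure.addHaar_affineSubspace volume _ hne_top

lemma exists_good_z (𝒜 : Set (Set (Fin n → ℝ))) (hfin : 𝒜.Finite)
    (hvol : ∀ C ∈ 𝒜, ∀ x : Fin n → ℝ, C.Nonempty →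
      volume ((affineSpan ℝ (insert x C) : AffineSubspace ℝ (Fin n → ℝ)) :
        Set (Fin n → ℝ)) = 0)
    (x₁ x₂ : Fin n → ℝ) (h₁ : ∀ C ∈ 𝒜, x₁ ∉ C) (h₂ : ∀ C ∈ 𝒜, x₂ ∉ C) :
    ∃ z : Fin n → ℝ, ∀ C ∈ 𝒜, ∀ w,
      (w ∈ segment ℝ x₁ z ∨ w ∈ segment ℝ z x₂) → w ∉ C := by
  classical
  set bad : Set (Fin n → ℝ) := ⋃ C ∈ 𝒜,
    (if C.Nonempty then
      ((affineSpan ℝ (insert x₁ C) : AffineSubspace ℝ (Fin n → ℝ)) : Set (Fin n → ℝ)) ∪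
      ((affineSpan ℝ (insert x₂ C) : AffineSubspace ℝ (Fin n → ℝ)) : Set (Fin n → ℝ))
     else ∅) with hbad
  have hbadvol : volume bad = 0 := by
    rw [hbad]
    refine (measure_biUnion_null_iff hfin.countable).mpr ?_
    intro C hC
    by_cases hne : C.Nonempty
    · rw [if_pos hne]
      refine measure_union_null (hvol C hC x₁ hne) (hvol C hC x₂ hne)
    · rw [if_neg hne]
      exact measure_empty
  have hbadne : bad ≠ Set.univ := by
    intro h
    rw [h] at hbadvol
    have : (volume (Set.univ : Set (Fin n → ℝ))) ≠ 0 :=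
      (IsOpen.measure_pos volume isOpen_univ ⟨0, trivial⟩).ne'
    exact this hbadvol
  obtain ⟨z, hz⟩ := Set.ne_univ_iff_exists_notMem bad |>.mp hbadne
  refine ⟨z, ?_⟩
  intro C hC w hw hwC
  have hCne : C.Nonempty := ⟨w, hwC⟩
  have hzin : z ∈ bad := by
    rw [hbad]
    refine Set.mem_biUnion hC ?_
    rw [if_pos hCne]
    rcases hw with hw | hw
    · left
      rw [segment_eq_image] at hw
      obtain ⟨t, ht, hwt⟩ := hw
      by_cases ht0 : t = 0
      · exfalso
        apply h₁ C hC
        have hwx : w = x₁ := by rw [← hwt, ht0]; simp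
        rwa [hwx] at hwC
      · have hwspan : w ∈ affineSpan ℝ (insert x₁ C) :=
          subset_affineSpan ℝ _ (Set.mem_insert_of_mem _ hwC)
        have hx₁span : x₁ ∈ affineSpan ℝ (insert x₁ C) :=
          subset_affineSpan ℝ _ (Set.mem_insert _ _)
        have h3 := AffineSubspace.smul_vsub_vadd_mem (affineSpan ℝ (insert x₁ C))
          (1/t) hwspan hx₁span hx₁span
        have heq : (1/t) • (w -ᵥ x₁) +ᵥ x₁ = z := by
          rw [← hwt, vsub_eq_sub, vadd_eq_add]
          match_scalars <;> field_simp <;> ring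
        rwa [heq] at h3
    · right
      rw [segment_eq_image] at hw
      obtain ⟨t, ht, hwt⟩ := hw
      by_cases ht1 : t = 1
      · exfalso
        apply h₂ C hC
        have hwx : w = x₂ := by rw [← hwt, ht1]; simp
        rwa [hwx] at hwC
      · have hwspan : w ∈ affineSpan ℝ (insert x₂ C) :=
          subset_affineSpan ℝ _ (Set.mem_insert_of_mem _ hwC)
        have hx₂span : x₂ ∈ affineSpan ℝ (insert x₂ C) :=
          subset_affineSpan ℝ _ (Set.mem_insert _ _)
        have h3 := AffineSubspace.smul_vsub_vadd_mem (affineSpan ℝ (insert x₂ C))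
          (1/(1-t)) hwspan hx₂span hx₂span
        have heq : (1/(1-t)) • (w -ᵥ x₂) +ᵥ x₂ = z := by
          rw [← hwt, vsub_eq_sub, vadd_eq_add]
          have h1t : 1 - t ≠ 0 := fun h => ht1 (by linarith [sub_eq_zero.mp h])
          match_scalars <;> field_simp <;> ring
        rwa [heq] at h3
  exact hz hzin

/-- **Adjacency implies full coverage.** If a finite nonempty family of
polyhedra in `ℝ^n`, each with nonempty interior and with pairwise disjoint
interiors, is such that every facet of every member is also a facet of some
other member, then the family covers all of `ℝ^n`. -/
theorem regions_cover_of_adjacency {n : ℕ}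
    (𝒞 : Set (Set (Fin n → ℝ))) (hfin : 𝒞.Finite) (hne : 𝒞.Nonempty)
    (hpoly : ∀ P ∈ 𝒞, IsPolyhedron P)
    (hint : ∀ P ∈ 𝒞, (interior P).Nonempty)
    (hdisj : 𝒞.Pairwise fun P Q => Disjoint (interior P) (interior Q))
    (hadj : ∀ P ∈ 𝒞, ∀ F : Set (Fin n → ℝ), IsFacet F P →
      ∃ Q ∈ 𝒞, Q ≠ P ∧ IsFacet F Q) :
    ⋃₀ 𝒞 = Set.univ := by
  classical
  by_contra hcov
  set S := ⋃₀ 𝒞 with hS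
  -- extract representations
  have hrep : ∀ P : Set (Fin n → ℝ), ∃ (k : ℕ) (a : Fin k → Fin n → ℝ) (b : Fin k → ℝ),
      P ∈ 𝒞 → P = {x | ∀ i, a i ⬝ᵥ x ≤ b i} := by
    intro P
    by_cases hP : P ∈ 𝒞
    · obtain ⟨k, a, b, h⟩ := hpoly P hP
      exact ⟨k, a, b, fun _ => h⟩
    · exact ⟨0, ![], ![], fun h => absurd h hP⟩
  choose kf af bf hf using hrep
  -- relevant hyperplane data
  set ℋ : Set ((Fin n → ℝ) × ℝ) :=
    ⋃ P ∈ 𝒞, (fun i => (af P i, bf P i)) '' {i | af P i ≠ 0} with hℋ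
  have hℋfin : ℋ.Finite := hfin.biUnion fun P _ => (Set.toFinite _).image _
  have hℋ0 : ∀ p ∈ ℋ, p.1 ≠ 0 := by
    intro p hp
    rw [hℋ] at hp
    obtain ⟨P, hP, i, hi, rfl⟩ := by
      simpa only [Set.mem_iUnion, Set.mem_image, Set.mem_setOf_eq] using hp
    exact hi
  have hℋmem : ∀ P ∈ 𝒞, ∀ i, af P i ≠ 0 → (af P i, bf P i) ∈ ℋ := by
    intro P hP i hi
    rw [hℋ]
    exact Set.mem_biUnion hP ⟨i, hi, rfl⟩
  -- the bad pieces
  set badset : ((Fin n → ℝ) × ℝ) → ((Fin n → ℝ) × ℝ) → Set (Fin n → ℝ) :=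
    fun p q => {y | p.1 ⬝ᵥ y = p.2 ∧ q.1 ⬝ᵥ y = q.2 ∧
      {y' : Fin n → ℝ | p.1 ⬝ᵥ y' = p.2} ≠ {y' : Fin n → ℝ | q.1 ⬝ᵥ y' = q.2}}
    with hbadset
  set 𝒜 : Set (Set (Fin n → ℝ)) := Set.image2 badset ℋ ℋ with h𝒜
  have h𝒜fin : 𝒜.Finite := hℋfin.image2 _ hℋfin
  set A : Set (Fin n → ℝ) := ⋃₀ 𝒜 with hA
  have hAmem : ∀ (p q : (Fin n → ℝ) × ℝ), p ∈ ℋ → q ∈ ℋ →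
      ∀ y, y ∈ badset p q → y ∈ A := by
    intro p q hp hq y hy
    exact ⟨badset p q, Set.mem_image2_of_mem hp hq, hy⟩
  -- A has measure zero
  have hAvol : volume A = 0 := by
    have hsub : A ⊆ ⋃ p ∈ ℋ, {y : Fin n → ℝ | p.1 ⬝ᵥ y = p.2} := by
      rintro y ⟨C, hC, hyC⟩
      obtain ⟨p, hp, q, hq, rfl⟩ := hC
      exact Set.mem_biUnion hp hyC.1
    refine measure_mono_null hsub ?_
    refine (measure_biUnion_null_iff hℋfin.countable).mpr ?_
    intro p hp
    exact volume_hyperplane (hℋ0 p hp)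
  -- every member is closed, hence S is closed
  have hclosed : ∀ P ∈ 𝒞, IsClosed P := by
    intro P hP
    rw [hf P hP]
    have : {x : Fin n → ℝ | ∀ i, af P i ⬝ᵥ x ≤ bf P i}
        = ⋂ i, {x : Fin n → ℝ | af P i ⬝ᵥ x ≤ bf P i} := by
      ext y; simp
    rw [this]
    exact isClosed_iInter fun i => isClosed_le (continuous_dot _) continuous_const
  have hSclosed : IsClosed S := by
    rw [hS, Set.sUnion_eq_biUnion]
    exact hfin.isClosed_biUnion hclosed
  -- the key claim: the frontier of S is contained in A
  have hfront : ∀ x ∈ frontier S, x ∈ A := by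
    intro x hxf
    by_contra hxA
    rw [hSclosed.frontier_eq] at hxf
    obtain ⟨hxS, hxint⟩ := hxf
    obtain ⟨P, hP, hxP⟩ := hxS
    have hPS : P ⊆ S := Set.subset_sUnion_of_mem hP
    have hxintP : x ∉ interior P := fun h => hxint (interior_mono hPS h)
    have hPrep := hf P hP
    -- the pair condition coming from x ∉ A
    have hpairsP : ∀ (p q : (Fin n → ℝ) × ℝ), p ∈ ℋ → q ∈ ℋ →
        p.1 ⬝ᵥ x = p.2 → q.1 ⬝ᵥ x = q.2 →
        {y : Fin n → ℝ | p.1 ⬝ᵥ y = p.2} = {y : Fin n → ℝ | q.1 ⬝ᵥ y = q.2} := by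
      intro p q hp hq hxp hxq
      by_contra hne'
      exact hxA (hAmem p q hp hq x ⟨hxp, hxq, hne'⟩)
    -- apply the half-ball lemma to P
    have hintP' : (interior {x : Fin n → ℝ | ∀ i, af P i ⬝ᵥ x ≤ bf P i}).Nonempty := by
      rw [← hPrep]; exact hint P hP
    have hxP' : ∀ i, af P i ⬝ᵥ x ≤ bf P i := by
      have h' := hxP; rw [hPrep] at h'; exact h'
    have hxintP' : x ∉ interior {x : Fin n → ℝ | ∀ i, af P i ⬝ᵥ x ≤ bf P i} := by
      rw [← hPrep]; exact hxintP
    obtain ⟨i₀, hai₀, hact₀, ε, hε, hball⟩ :=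
      halfball (af P) (bf P) hintP' x hxP' hxintP'
        (fun i j hi hj hxi hxj =>
          hpairsP _ _ (hℋmem P hP i hi) (hℋmem P hP j hj) hxi hxj)
    set a := af P i₀ with ha
    set b := bf P i₀ with hb
    -- the facet of P at x
    have hfacet : IsFacet (P ∩ {y : Fin n → ℝ | a ⬝ᵥ y = b}) P := by
      rw [hPrep]
      exact isFacet_of_halfball (af P) (bf P) i₀ hai₀ x hact₀ ε hε hball
    obtain ⟨Q, hQ, hQP, hFQ⟩ := hadj P hP _ hfacet
    obtain ⟨a', β', ha', hle', hFeq, _⟩ := hFQ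
    have hxF : x ∈ P ∩ {y : Fin n → ℝ | a ⬝ᵥ y = b} := ⟨hxP, hact₀⟩
    have hxQ : x ∈ Q := (hFeq ▸ hxF).1
    have hQS : Q ⊆ S := Set.subset_sUnion_of_mem hQ
    have hxintQ : x ∉ interior Q := fun h => hxint (interior_mono hQS h)
    have hQrep := hf Q hQ
    -- apply the half-ball lemma to Q
    have hintQ' : (interior {x : Fin n → ℝ | ∀ i, af Q i ⬝ᵥ x ≤ bf Q i}).Nonempty := by
      rw [← hQrep]; exact hint Q hQ
    have hxQ' : ∀ i, af Q i ⬝ᵥ x ≤ bf Q i := by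
      have h' := hxQ; rw [hQrep] at h'; exact h'
    have hxintQ' : x ∉ interior {x : Fin n → ℝ | ∀ i, af Q i ⬝ᵥ x ≤ bf Q i} := by
      rw [← hQrep]; exact hxintQ
    obtain ⟨j₀, hcj₀, hactj₀, ε', hε', hball'⟩ :=
      halfball (af Q) (bf Q) hintQ' x hxQ' hxintQ'
        (fun i j hi hj hxi hxj =>
          hpairsP _ _ (hℋmem Q hQ i hi) (hℋmem Q hQ j hj) hxi hxj)
    set c := af Q j₀ with hc
    set d := bf Q j₀ with hd
    -- the two active hyperplanes coincide
    have hsets : {y : Fin n → ℝ | a ⬝ᵥ y = b} = {y : Fin n → ℝ | c ⬝ᵥ y = d} :=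
      hpairsP (a, b) (c, d) (hℋmem P hP i₀ hai₀) (hℋmem Q hQ j₀ hcj₀) hact₀ hactj₀
    obtain ⟨l, hl0, hcl, hdl⟩ := hyperplane_eq_iff hai₀ hcj₀ hsets
    have haa := dot_self_pos hai₀
    rcases lt_or_gt_of_ne hl0 with hlneg | hlpos
    · -- opposite sides: x is interior to P ∪ Q ⊆ S
      apply hxint
      apply mem_interior.mpr
      refine ⟨Metric.ball x (min ε ε'), ?_, Metric.isOpen_ball, Metric.mem_ball_self (by positivity)⟩
      intro w hw
      rcases le_or_gt (a ⬝ᵥ w) b with hwa | hwa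
      · apply hPS
        rw [hPrep]
        exact hball ⟨Metric.ball_subset_ball (min_le_left _ _) hw, hwa⟩
      · apply hQS
        rw [hQrep]
        apply hball'
        refine ⟨Metric.ball_subset_ball (min_le_right _ _) hw, ?_⟩
        show c ⬝ᵥ w ≤ d
        rw [hcl, hdl, smul_dotProduct, smul_eq_mul]
        nlinarith
    · -- same side: interiors of P and Q meet
      set r := (min ε ε') / (2 * (‖a‖ + 1)) with hr
      have hrpos : 0 < r := by
        apply div_pos (lt_min hε hε')
        positivity
      set y := x - r • a with hy
      have hydist : dist y x < min ε ε' := by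
        rw [hy, dist_eq_norm, sub_sub_cancel_left, norm_neg, norm_smul,
          Real.norm_eq_abs, abs_of_pos hrpos, hr, div_mul_eq_mul_div,
          div_lt_iff₀ (by positivity)]
        nlinarith [norm_nonneg a, lt_min hε hε']
      have hya : a ⬝ᵥ y < b := by
        rw [hy, dotProduct_sub, dotProduct_smul, smul_eq_mul, hact₀]
        nlinarith
      set O := Metric.ball x (min ε ε') ∩ {w : Fin n → ℝ | a ⬝ᵥ w < b} with hO
      have hOopen : IsOpen O :=
        Metric.isOpen_ball.inter (isOpen_lt (continuous_dot a) continuous_const)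
      have hyO : y ∈ O := ⟨by rwa [Metric.mem_ball], hya⟩
      have hOP : O ⊆ P := by
        rintro w ⟨hw1, hw2⟩
        have hw2' : a ⬝ᵥ w < b := hw2
        rw [hPrep]
        refine hball ⟨Metric.ball_subset_ball (min_le_left _ _) hw1, ?_⟩
        show a ⬝ᵥ w ≤ b
        exact le_of_lt hw2'
      have hOQ : O ⊆ Q := by
        rintro w ⟨hw1, hw2⟩
        have hw2' : a ⬝ᵥ w < b := hw2
        rw [hQrep]
        apply hball'
        refine ⟨Metric.ball_subset_ball (min_le_right _ _) hw1, ?_⟩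
        show c ⬝ᵥ w ≤ d
        rw [hcl, hdl, smul_dotProduct, smul_eq_mul]
        nlinarith
      have hyintP : y ∈ interior P := mem_interior.mpr ⟨O, hOP, hOopen, hyO⟩
      have hyintQ : y ∈ interior Q := mem_interior.mpr ⟨O, hOQ, hOopen, hyO⟩
      exact Set.disjoint_left.mp (hdisj hP hQ (Ne.symm hQP)) hyintP hyintQ
  -- pieces of A satisfy the smallness condition
  have hvol𝒜 : ∀ C ∈ 𝒜, ∀ x : Fin n → ℝ, C.Nonempty →
      volume ((affineSpan ℝ (insert x C) : AffineSubspace ℝ (Fin n → ℝ)) :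
        Set (Fin n → ℝ)) = 0 := by
    rintro C hC x hCne
    obtain ⟨p, hp, q, hq, rfl⟩ := hC
    obtain ⟨w, hw⟩ := hCne
    exact volume_span_insert_zero (hℋ0 p hp) (hℋ0 q hq) hw.2.2
      (badset p q) (fun y hy => ⟨hy.1, hy.2.1⟩) ⟨w, hw⟩ x
  -- choose endpoints
  have hSne : (interior S).Nonempty := by
    obtain ⟨P, hP⟩ := hne
    obtain ⟨y, hy⟩ := hint P hP
    exact ⟨y, interior_mono (Set.subset_sUnion_of_mem hP) hy⟩
  have hx₁ : ∃ x₁, x₁ ∈ interior S ∧ x₁ ∉ A := by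
    by_contra h
    push_neg at h
    have : interior S ⊆ A := fun y hy => h y hy
    have := measure_mono_null this hAvol
    exact (IsOpen.measure_pos volume isOpen_interior hSne).ne' this
  have hx₂ : ∃ x₂, x₂ ∈ Sᶜ ∧ x₂ ∉ A := by
    have hScne : Sᶜ.Nonempty := by
      rcases Set.ne_univ_iff_exists_notMem S |>.mp hcov with ⟨y, hy⟩
      exact ⟨y, hy⟩
    by_contra h
    push_neg at h
    have : Sᶜ ⊆ A := fun y hy => h y hy
    have := measure_mono_null this hAvol
    exact (IsOpen.measure_pos volume hSclosed.isOpen_compl hScne).ne' this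
  obtain ⟨x₁, hx₁S, hx₁A⟩ := hx₁
  obtain ⟨x₂, hx₂S, hx₂A⟩ := hx₂
  -- pick a good middle point z
  obtain ⟨z, hz⟩ := exists_good_z 𝒜 h𝒜fin hvol𝒜 x₁ x₂
    (fun C hC h => hx₁A ⟨C, hC, h⟩) (fun C hC h => hx₂A ⟨C, hC, h⟩)
  -- the path avoids the frontier, contradiction with connectedness
  set J := segment ℝ x₁ z ∪ segment ℝ z x₂ with hJ
  have hJconn : IsPreconnected J := by
    apply IsPreconnected.union z (right_mem_segment ℝ x₁ z) (left_mem_segment ℝ z x₂)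
    · exact (convex_segment x₁ z).isPreconnected
    · exact (convex_segment z x₂).isPreconnected
  have hJsub : J ⊆ interior S ∪ Sᶜ := by
    intro w hw
    have hwA : w ∉ A := by
      intro hwA'
      obtain ⟨C, hC, hwC⟩ := hwA'
      exact hz C hC w (by rwa [hJ] at hw) hwC
    have hwf : w ∉ frontier S := fun h => hwA (hfront w h)
    rw [hSclosed.frontier_eq] at hwf
    by_cases hwS : w ∈ S
    · left
      by_contra h
      exact hwf ⟨hwS, h⟩
    · right
      exact hwS
  have := hJconn (interior S) Sᶜ isOpen_interior hSclosed.isOpen_compl hJsub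
    ⟨x₁, Set.mem_union_left _ (left_mem_segment ℝ x₁ z), hx₁S⟩
    ⟨x₂, Set.mem_union_right _ (right_mem_segment ℝ z x₂), hx₂S⟩
  obtain ⟨y, _, hyint, hyc⟩ := this
  exact hyc (interior_subset hyint)
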